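/- Let G be a finite simple graph with maximum degree Δ(G) ≥ 2. Then the largest root of the matching polynomial of the subdivision of G satisfies λ(𝓜(S(G), x)) < 1 + √(Δ(G) − 1). In particular, if F is a forest with Δ(F) ≥ 2, then the largest eigenvalue of the adjacency matrix of S(F) satisfies λ(A(S(F))) < 1 + √(Δ(F) − 1). -/

import Mathlib

namespace LM

open Finset

variable {V : Type*}

/-- The set of matchings of `G`, as finsets of edges that pairwise share no vertex. -/
def matchings [Fintype V] [DecidableEq V] (G : SimpleGraph V) [DecidableRel G.Adj] :
    Finset (Finset (Sym2 V)) :=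
  G.edgeFinset.powerset.filter
    (fun M => ∀ e ∈ M, ∀ f ∈ M, e ≠ f → ∀ w : V, w ∈ e → w ∉ f)

/-- The set of vertices covered by a set of edges. -/
def covered [Fintype V] [DecidableEq V] (M : Finset (Sym2 V)) : Finset V :=
  Finset.univ.filter (fun v => ∃ e ∈ M, v ∈ e)

/-- The multivariate matching polynomial `𝔐(G, x_G)`. -/
noncomputable def mvMatch [Fintype V] [DecidableEq V] (G : SimpleGraph V)
    [DecidableRel G.Adj] : MvPolynomial V ℝ :=
  ∑ M ∈ matchings G, (-1 : MvPolynomial V ℝ) ^ M.card *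
    ∏ v ∈ Finset.univ \ covered M, MvPolynomial.X v

/-- The matching polynomial `𝓜(G, x)`. -/
noncomputable def matchPoly [Fintype V] [DecidableEq V] (G : SimpleGraph V)
    [DecidableRel G.Adj] : Polynomial ℝ :=
  ∑ M ∈ matchings G, (-1 : Polynomial ℝ) ^ M.card *
    Polynomial.X ^ (Fintype.card V - 2 * M.card)

/-- The Laplacian matching polynomial `𝓛𝓜(G, x)`. -/
noncomputable def lapMatch [Fintype V] [DecidableEq V] (G : SimpleGraph V)
    [DecidableRel G.Adj] : Polynomial ℝ :=
  ∑ M ∈ matchings G, (-1 : Polynomial ℝ) ^ M.card *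
    ∏ v ∈ Finset.univ \ covered M, (Polynomial.X - Polynomial.C (G.degree v : ℝ))

/-- The largest real root of a polynomial (`sSup` of its set of real roots). -/
noncomputable def lroot (p : Polynomial ℝ) : ℝ := sSup {x : ℝ | p.IsRoot x}

instance instDecidableRelInduceAdj (G : SimpleGraph V) [DecidableRel G.Adj] (s : Set V) :
    DecidableRel (G.induce s).Adj := fun a b =>
  inferInstanceAs (Decidable (G.Adj a b))

/-- The relation underlying the subdivision of `G`: an original vertex `a` is joined to the
new vertex `v_e` of every edge `e` incident with `a`. -/
def sdRel (G : SimpleGraph V) (x y : V ⊕ G.edgeSet) : Prop :=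
  ∃ (a : V) (e : G.edgeSet), x = Sum.inl a ∧ y = Sum.inr e ∧ a ∈ (e : Sym2 V)

instance [Fintype V] [DecidableEq V] (G : SimpleGraph V) [DecidableRel G.Adj]
    (x y : V ⊕ G.edgeSet) : Decidable (sdRel G x y) :=
  inferInstanceAs (Decidable (∃ (_ : V) (_ : G.edgeSet), _ ∧ _ ∧ _))

/-- The subdivision `S(G)` of `G`: every edge `e = {a, b}` is replaced by a new vertex `v_e`
together with the two edges `{a, v_e}` and `{v_e, b}`. -/
def subdivision (G : SimpleGraph V) : SimpleGraph (V ⊕ G.edgeSet) :=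
  SimpleGraph.fromRel (sdRel G)

instance [Fintype V] [DecidableEq V] (G : SimpleGraph V) [DecidableRel G.Adj] :
    DecidableRel (subdivision G).Adj := fun x y =>
  inferInstanceAs (Decidable (x ≠ y ∧ (sdRel G x y ∨ sdRel G y x)))

section Basic

variable [Fintype V] [DecidableEq V] {G : SimpleGraph V} [DecidableRel G.Adj]

lemma mem_matchings {M : Finset (Sym2 V)} :
    M ∈ matchings G ↔ M ⊆ G.edgeFinset ∧
      ∀ e ∈ M, ∀ f ∈ M, e ≠ f → ∀ w : V, w ∈ e → w ∉ f := by
  simp [matchings]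

lemma mem_covered {M : Finset (Sym2 V)} {v : V} :
    v ∈ covered M ↔ ∃ e ∈ M, v ∈ e := by simp [covered]

lemma matchings_subset {M M' : Finset (Sym2 V)} (hM : M ∈ matchings G) (h : M' ⊆ M) :
    M' ∈ matchings G := by
  rw [mem_matchings] at hM ⊢
  exact ⟨h.trans hM.1, fun e he f hf => hM.2 e (h he) f (h hf)⟩

lemma unique_edge {M : Finset (Sym2 V)} (hM : M ∈ matchings G) {u : V} {e f : Sym2 V}
    (he : e ∈ M) (hue : u ∈ e) (hf : f ∈ M) (huf : u ∈ f) : e = f := by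
  by_contra hne
  exact (mem_matchings.1 hM).2 e he f hf hne u hue huf

lemma empty_mem_matchings : (∅ : Finset (Sym2 V)) ∈ matchings G := by
  simp [mem_matchings]

lemma covered_empty : covered (∅ : Finset (Sym2 V)) = ∅ := by
  ext v; simp [mem_covered]

lemma filter_mem_pair {a b : V} (hab : a ≠ b) :
    Finset.univ.filter (fun v => v ∈ s(a, b)) = {a, b} := by
  ext v; simp [Sym2.mem_iff]

lemma card_covered {M : Finset (Sym2 V)} (hM : M ∈ matchings G) :
    (covered M).card = 2 * M.card := by
  classical
  have hcov : covered M = M.biUnion (fun e => Finset.univ.filter (fun v => v ∈ e)) := by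
    ext v; simp [mem_covered]
  have hcard : ∀ e ∈ M, (Finset.univ.filter (fun v => v ∈ e)).card = 2 := by
    intro e he
    have hedge : e ∈ G.edgeSet := SimpleGraph.mem_edgeFinset.1 ((mem_matchings.1 hM).1 he)
    have hnd := G.not_isDiag_of_mem_edgeSet hedge
    induction e with
    | _ a b =>
      have hab : a ≠ b := by simpa [Sym2.isDiag_iff_proj_eq] using hnd
      rw [filter_mem_pair hab, Finset.card_pair hab]
  rw [hcov, Finset.card_biUnion, Finset.sum_congr rfl hcard, Finset.sum_const, smul_eq_mul,
    Nat.mul_comm]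
  intro e he f hf hef
  simp only [Finset.disjoint_left, Finset.mem_filter]
  rintro v ⟨-, hv⟩ ⟨-, hv'⟩
  exact (mem_matchings.1 hM).2 e he f hf hef v hv hv'

end Basic

section Mu

variable [Fintype V] [DecidableEq V] (G : SimpleGraph V) [DecidableRel G.Adj]

/-- Matchings covering only vertices in `S`. -/
def mm (S : Finset V) : Finset (Finset (Sym2 V)) :=
  (matchings G).filter (fun M => covered M ⊆ S)

noncomputable def mu (S : Finset V) (x : ℝ) : ℝ :=
  ∑ M ∈ mm G S, (-1 : ℝ) ^ M.card * x ^ (S.card - 2 * M.card)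

variable {G}

lemma mem_mm {S : Finset V} {M : Finset (Sym2 V)} :
    M ∈ mm G S ↔ M ∈ matchings G ∧ covered M ⊆ S := by simp [mm]

lemma two_mul_card_le {S : Finset V} {M : Finset (Sym2 V)} (h : M ∈ mm G S) :
    2 * M.card ≤ S.card := by
  rw [← card_covered (mem_mm.1 h).1]
  exact Finset.card_le_card (mem_mm.1 h).2

lemma mu_empty (x : ℝ) : mu G ∅ x = 1 := by
  have : mm G (∅ : Finset V) = {∅} := by
    ext M
    simp only [mem_mm, Finset.mem_singleton, Finset.subset_empty]
    constructor
    · rintro ⟨hM, hcov⟩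
      by_contra hne
      obtain ⟨e, he⟩ := Finset.nonempty_iff_ne_empty.2 hne
      obtain ⟨a, b⟩ := e
      have : a ∈ covered M := mem_covered.2 ⟨s(a, b), he, by simp⟩
      simp [hcov] at this
    · rintro rfl
      exact ⟨empty_mem_matchings, by simp [covered_empty]⟩
  simp [mu, this]

end Mu

section MuRec

variable [Fintype V] [DecidableEq V] {G : SimpleGraph V} [DecidableRel G.Adj]

lemma other'_eq {z : Sym2 V} {u v : V} (h : u ∈ z) (hz : z = s(u, v)) (huv : u ≠ v) :
    Sym2.Mem.other' h = v := by
  subst hz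
  have hs := Sym2.other_spec' h
  rw [Sym2.eq_iff] at hs
  tauto

lemma covered_insert {M : Finset (Sym2 V)} {u v : V} :
    covered (insert s(u, v) M) = insert u (insert v (covered M)) := by
  ext w
  simp only [mem_covered, Finset.mem_insert]
  constructor
  · rintro ⟨e, rfl | he', hw⟩
    · rcases Sym2.mem_iff.1 hw with rfl | rfl
      · exact Or.inl rfl
      · exact Or.inr (Or.inl rfl)
    · exact Or.inr (Or.inr ⟨e, he', hw⟩)
  · rintro (h | h | ⟨e, he, hw⟩)
    · exact ⟨s(u, v), Or.inl rfl, by simp [h]⟩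
    · exact ⟨s(u, v), Or.inl rfl, by simp [h]⟩
    · exact ⟨e, Or.inr he, hw⟩

lemma insert_mem_matchings {M : Finset (Sym2 V)} {u v : V} (hM : M ∈ matchings G)
    (hadj : G.Adj u v) (hu : u ∉ covered M) (hv : v ∉ covered M) :
    insert s(u, v) M ∈ matchings G := by
  rw [mem_matchings] at hM ⊢
  constructor
  · exact Finset.insert_subset (SimpleGraph.mem_edgeFinset.2 hadj) hM.1
  · intro e he f hf hef w hwe hwf
    rcases Finset.mem_insert.1 he with he' | he'
    · rcases Finset.mem_insert.1 hf with hf' | hf'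
      · exact hef (he'.trans hf'.symm)
      · subst he'
        rcases Sym2.mem_iff.1 hwe with h | h
        · exact hu (h ▸ mem_covered.2 ⟨f, hf', hwf⟩)
        · exact hv (h ▸ mem_covered.2 ⟨f, hf', hwf⟩)
    · rcases Finset.mem_insert.1 hf with hf' | hf'
      · subst hf'
        rcases Sym2.mem_iff.1 hwf with h | h
        · exact hu (h ▸ mem_covered.2 ⟨e, he', hwe⟩)
        · exact hv (h ▸ mem_covered.2 ⟨e, he', hwe⟩)
      · exact hM.2 e he' f hf' hef w hwe hwf

lemma mu_rec {S : Finset V} {u : V} (hu : u ∈ S) (x : ℝ) :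
    mu G S x = x * mu G (S.erase u) x
      - ∑ v ∈ S.filter (fun v => G.Adj u v), mu G ((S.erase u).erase v) x := by
  classical
  have hpos : 0 < S.card := Finset.card_pos.2 ⟨u, hu⟩
  have hsplit := Finset.sum_filter_add_sum_filter_not (mm G S) (fun M => u ∈ covered M)
    (fun M => (-1 : ℝ) ^ M.card * x ^ (S.card - 2 * M.card))
  -- Part A : matchings not covering u
  have hA : (mm G S).filter (fun M => ¬ u ∈ covered M) = mm G (S.erase u) := by
    ext M
    simp only [Finset.mem_filter, mem_mm, Finset.subset_erase]
    tauto
  have hAsum : ∑ M ∈ (mm G S).filter (fun M => ¬ u ∈ covered M),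
      (-1 : ℝ) ^ M.card * x ^ (S.card - 2 * M.card) = x * mu G (S.erase u) x := by
    rw [hA, mu, Finset.mul_sum]
    refine Finset.sum_congr rfl (fun M hM => ?_)
    have h2 : 2 * M.card ≤ (S.erase u).card := two_mul_card_le hM
    have hcard : (S.erase u).card = S.card - 1 := Finset.card_erase_of_mem hu
    have hexp : S.card - 2 * M.card = ((S.erase u).card - 2 * M.card) + 1 := by omega
    rw [hexp, pow_succ]
    ring
  -- Part B : matchings covering u
  have hB : ∑ M ∈ (mm G S).filter (fun M => u ∈ covered M),
      (-1 : ℝ) ^ M.card * x ^ (S.card - 2 * M.card)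
      = ∑ v ∈ S.filter (fun v => G.Adj u v), (-1) * mu G ((S.erase u).erase v) x := by
    have hsig : ∑ v ∈ S.filter (fun v => G.Adj u v), (-1 : ℝ) * mu G ((S.erase u).erase v) x
        = ∑ p ∈ (S.filter (fun v => G.Adj u v)).sigma
            (fun v => mm G ((S.erase u).erase v)),
          (-1 : ℝ) * ((-1) ^ p.2.card * x ^ (((S.erase u).erase p.1).card - 2 * p.2.card)) := by
      rw [Finset.sum_sigma]
      exact Finset.sum_congr rfl (fun v hv => by rw [mu, Finset.mul_sum])
    rw [hsig]
    refine (Finset.sum_nbij'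
      (i := fun (p : (_ : V) × Finset (Sym2 V)) => insert s(u, p.1) p.2)
      (j := fun M => if h : ∃ e, e ∈ M ∧ u ∈ e then
        ⟨Sym2.Mem.other' h.choose_spec.2, M.erase h.choose⟩ else ⟨u, M⟩)
      ?_ ?_ ?_ ?_ ?_).symm
    · -- i maps into filter set
      rintro ⟨v, M'⟩ hp
      rw [Finset.mem_sigma] at hp
      obtain ⟨hvmem, hM'⟩ := hp
      rw [Finset.mem_filter] at hvmem
      obtain ⟨hvS, hadj⟩ := hvmem
      obtain ⟨hM'match, hM'sub⟩ := mem_mm.1 hM'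
      dsimp only at hM'sub hadj ⊢
      have huv : u ≠ v := G.ne_of_adj hadj
      have hunc : u ∉ covered M' := fun h => by
        have := hM'sub h; simp at this
      have hvnc : v ∉ covered M' := fun h => by
        have := hM'sub h; simp at this
      rw [Finset.mem_filter]
      constructor
      · refine mem_mm.2 ⟨insert_mem_matchings hM'match hadj hunc hvnc, ?_⟩
        rw [covered_insert]
        refine Finset.insert_subset hu (Finset.insert_subset hvS ?_)
        exact hM'sub.trans ((Finset.erase_subset _ _).trans (Finset.erase_subset _ _))
      · rw [covered_insert]
        simp
    · -- j maps into sigma set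
      intro M hMf
      rw [Finset.mem_filter] at hMf
      obtain ⟨hMm, hucov⟩ := hMf
      obtain ⟨hMmatch, hMsub⟩ := mem_mm.1 hMm
      have h : ∃ e, e ∈ M ∧ u ∈ e := by
        obtain ⟨e, he, hue⟩ := mem_covered.1 hucov
        exact ⟨e, he, hue⟩
      rw [dif_pos h]
      obtain ⟨he₀, hue₀⟩ := h.choose_spec
      have hspec : s(u, Sym2.Mem.other' hue₀) = h.choose := Sym2.other_spec' hue₀
      have hv₀cov : Sym2.Mem.other' hue₀ ∈ covered M :=
        mem_covered.2 ⟨h.choose, he₀, Sym2.other_mem' hue₀⟩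
      have hadj : G.Adj u (Sym2.Mem.other' hue₀) := by
        rw [← SimpleGraph.mem_edgeSet, hspec]
        exact SimpleGraph.mem_edgeFinset.1 ((mem_matchings.1 hMmatch).1 he₀)
      rw [Finset.mem_sigma]
      refine ⟨Finset.mem_filter.2 ⟨hMsub hv₀cov, hadj⟩, mem_mm.2
        ⟨matchings_subset hMmatch (Finset.erase_subset _ _), ?_⟩⟩
      intro w hw
      obtain ⟨f, hf, hwf⟩ := mem_covered.1 hw
      have hfM : f ∈ M := Finset.mem_of_mem_erase hf
      have hfne : f ≠ h.choose := Finset.ne_of_mem_erase hf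
      have hwu : w ≠ u := by
        rintro rfl
        exact hfne (unique_edge hMmatch hfM hwf he₀ hue₀)
      have hwv : w ≠ Sym2.Mem.other' hue₀ := by
        rintro rfl
        exact hfne (unique_edge hMmatch hfM hwf he₀ (Sym2.other_mem' hue₀))
      exact Finset.mem_erase.2 ⟨hwv, Finset.mem_erase.2 ⟨hwu, hMsub
        (mem_covered.2 ⟨f, hfM, hwf⟩)⟩⟩
    · -- left inverse : j (i p) = p
      rintro ⟨v, M'⟩ hp
      rw [Finset.mem_sigma] at hp
      obtain ⟨hvmem, hM'⟩ := hp
      rw [Finset.mem_filter] at hvmem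
      obtain ⟨hvS, hadj⟩ := hvmem
      obtain ⟨hM'match, hM'sub⟩ := mem_mm.1 hM'
      dsimp only at hM'sub hadj ⊢
      have huv : u ≠ v := G.ne_of_adj hadj
      have hunc : u ∉ covered M' := fun h => by
        have := hM'sub h; simp at this
      have hvnc : v ∉ covered M' := fun h => by
        have := hM'sub h; simp at this
      have henotin : s(u, v) ∉ M' := fun h =>
        hunc (mem_covered.2 ⟨s(u, v), h, by simp⟩)
      have hmatch := insert_mem_matchings hM'match hadj hunc hvnc
      have h : ∃ e, e ∈ insert s(u, v) M' ∧ u ∈ e :=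
        ⟨s(u, v), Finset.mem_insert_self _ _, by simp⟩
      rw [dif_pos h]
      obtain ⟨he₀, hue₀⟩ := h.choose_spec
      have he₀eq : h.choose = s(u, v) :=
        unique_edge hmatch he₀ hue₀ (Finset.mem_insert_self _ _) (by simp)
      have hv₀ : Sym2.Mem.other' hue₀ = v := other'_eq hue₀ he₀eq huv
      have herase : (insert s(u, v) M').erase h.choose = M' := by
        rw [he₀eq, Finset.erase_insert henotin]
      exact Sigma.ext hv₀ (heq_of_eq herase)
    · -- right inverse : i (j M) = M
      intro M hMf
      rw [Finset.mem_filter] at hMf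
      obtain ⟨hMm, hucov⟩ := hMf
      obtain ⟨hMmatch, hMsub⟩ := mem_mm.1 hMm
      have h : ∃ e, e ∈ M ∧ u ∈ e := by
        obtain ⟨e, he, hue⟩ := mem_covered.1 hucov
        exact ⟨e, he, hue⟩
      rw [dif_pos h]
      obtain ⟨he₀, hue₀⟩ := h.choose_spec
      have hspec : s(u, Sym2.Mem.other' hue₀) = h.choose := Sym2.other_spec' hue₀
      dsimp only
      rw [hspec, Finset.insert_erase he₀]
    · -- summand equality
      rintro ⟨v, M'⟩ hp
      rw [Finset.mem_sigma] at hp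
      obtain ⟨hvmem, hM'⟩ := hp
      rw [Finset.mem_filter] at hvmem
      obtain ⟨hvS, hadj⟩ := hvmem
      obtain ⟨hM'match, hM'sub⟩ := mem_mm.1 hM'
      dsimp only at hM'sub hadj ⊢
      have huv : u ≠ v := G.ne_of_adj hadj
      have hunc : u ∉ covered M' := fun h => by
        have := hM'sub h; simp at this
      have henotin : s(u, v) ∉ M' := fun h =>
        hunc (mem_covered.2 ⟨s(u, v), h, by simp⟩)
      have hcardins : (insert s(u, v) M').card = M'.card + 1 :=
        Finset.card_insert_of_notMem henotin
      have hvS' : v ∈ S.erase u := Finset.mem_erase.2 ⟨huv.symm, hvS⟩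
      have hc1 : (S.erase u).card = S.card - 1 := Finset.card_erase_of_mem hu
      have hc2 : ((S.erase u).erase v).card = S.card - 1 - 1 := by
        rw [Finset.card_erase_of_mem hvS', hc1]
      have h2 : 2 * M'.card ≤ ((S.erase u).erase v).card := two_mul_card_le hM'
      have hexp : S.card - 2 * (insert s(u, v) M').card
          = ((S.erase u).erase v).card - 2 * M'.card := by
        rw [hcardins]; omega
      rw [hexp, hcardins, pow_succ]
      ring
  have htot : mu G S x = ∑ M ∈ (mm G S).filter (fun M => u ∈ covered M),
      (-1 : ℝ) ^ M.card * x ^ (S.card - 2 * M.card)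
      + ∑ M ∈ (mm G S).filter (fun M => ¬ u ∈ covered M),
      (-1 : ℝ) ^ M.card * x ^ (S.card - 2 * M.card) := hsplit.symm
  rw [htot, hB, hAsum]
  rw [Finset.sum_congr rfl (fun v _ => neg_one_mul (mu G ((S.erase u).erase v) x)),
    Finset.sum_neg_distrib]
  ring

end MuRec

section Subdiv

variable [Fintype V] [DecidableEq V] {G : SimpleGraph V} [DecidableRel G.Adj]

lemma subdivision_adj_inl_inr {a : V} {e : G.edgeSet} :
    (subdivision G).Adj (Sum.inl a) (Sum.inr e) ↔ a ∈ (e : Sym2 V) := by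
  simp [subdivision, SimpleGraph.fromRel_adj, sdRel]

lemma subdivision_adj_inr_inl {a : V} {e : G.edgeSet} :
    (subdivision G).Adj (Sum.inr e) (Sum.inl a) ↔ a ∈ (e : Sym2 V) := by
  rw [SimpleGraph.adj_comm]; exact subdivision_adj_inl_inr

lemma not_subdivision_adj_inl_inl {a b : V} :
    ¬ (subdivision G).Adj (Sum.inl a) (Sum.inl b) := by
  simp [subdivision, SimpleGraph.fromRel_adj, sdRel]

lemma not_subdivision_adj_inr_inr {e f : G.edgeSet} :
    ¬ (subdivision G).Adj (Sum.inr e) (Sum.inr f) := by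
  simp [subdivision, SimpleGraph.fromRel_adj, sdRel]

/-- neighbours of an original vertex, within any `S`, number at most its degree. -/
lemma degIn_inl_le (S : Finset (V ⊕ G.edgeSet)) (a : V) :
    (S.filter ((subdivision G).Adj (Sum.inl a))).card ≤ G.degree a := by
  classical
  rw [← SimpleGraph.card_neighborFinset_eq_degree]
  refine Finset.card_le_card_of_injOn
    (fun w => match w with
      | Sum.inl _ => a
      | Sum.inr e => if h : a ∈ (e : Sym2 V) then Sym2.Mem.other' h else a) ?_ ?_
  · rintro (b | e) hw
    · exact absurd (Finset.mem_filter.1 hw).2 not_subdivision_adj_inl_inl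
    · have hae : a ∈ (e : Sym2 V) := subdivision_adj_inl_inr.1 (Finset.mem_filter.1 hw).2
      simp only [dif_pos hae]
      rw [Finset.mem_coe, SimpleGraph.mem_neighborFinset, ← SimpleGraph.mem_edgeSet, Sym2.other_spec' hae]
      exact e.2
  · rintro (b | e) hw (b' | e') hw' heq
    · exact absurd (Finset.mem_filter.1 hw).2 not_subdivision_adj_inl_inl
    · exact absurd (Finset.mem_filter.1 hw).2 not_subdivision_adj_inl_inl
    · exact absurd (Finset.mem_filter.1 hw').2 not_subdivision_adj_inl_inl
    · have hae : a ∈ (e : Sym2 V) := subdivision_adj_inl_inr.1 (Finset.mem_filter.1 hw).2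
      have hae' : a ∈ (e' : Sym2 V) := subdivision_adj_inl_inr.1 (Finset.mem_filter.1 hw').2
      simp only [dif_pos hae, dif_pos hae'] at heq
      have : (e : Sym2 V) = (e' : Sym2 V) := by
        rw [← Sym2.other_spec' hae, ← Sym2.other_spec' hae', heq]
      exact congrArg Sum.inr (Subtype.ext this)

lemma degIn_inr_le (S : Finset (V ⊕ G.edgeSet)) (e : G.edgeSet) :
    (S.filter ((subdivision G).Adj (Sum.inr e))).card ≤ 2 := by
  classical
  have hnd : ¬ (e : Sym2 V).IsDiag := G.not_isDiag_of_mem_edgeSet e.2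
  have hsub : S.filter ((subdivision G).Adj (Sum.inr e)) ⊆
      (Finset.univ.filter (fun v => v ∈ (e : Sym2 V))).image Sum.inl := by
    rintro (a | f) hw
    · exact Finset.mem_image_of_mem _ (Finset.mem_filter.2 ⟨Finset.mem_univ _,
        subdivision_adj_inr_inl.1 (Finset.mem_filter.1 hw).2⟩)
    · exact absurd (Finset.mem_filter.1 hw).2 not_subdivision_adj_inr_inr
  refine (Finset.card_le_card hsub).trans ((Finset.card_image_le).trans ?_)
  have key : ∀ z : Sym2 V, ¬ z.IsDiag →
      (Finset.univ.filter (fun v => v ∈ z)).card = 2 := by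
    refine Sym2.ind (fun y z hzd => ?_)
    have hyz : y ≠ z := by simpa [Sym2.isDiag_iff_proj_eq] using hzd
    rw [filter_mem_pair hyz, Finset.card_pair hyz]
  rw [key _ hnd]

lemma filter_erase_adj {W : Type*} [Fintype W] [DecidableEq W] (Γ : SimpleGraph W)
    [DecidableRel Γ.Adj] {S : Finset W} {u v : W} (hu : u ∈ S) (hadj : Γ.Adj v u) :
    ((S.erase u).filter (Γ.Adj v)).card + 1 = (S.filter (Γ.Adj v)).card := by
  have h1 : (S.erase u).filter (Γ.Adj v) = (S.filter (Γ.Adj v)).erase u := by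
    ext w
    simp only [Finset.mem_filter, Finset.mem_erase]
    tauto
  rw [h1, Finset.card_erase_of_mem (Finset.mem_filter.2 ⟨hu, hadj⟩)]
  have : 0 < (S.filter (Γ.Adj v)).card :=
    Finset.card_pos.2 ⟨u, Finset.mem_filter.2 ⟨hu, hadj⟩⟩
  omega

end Subdiv


section Key

variable [Fintype V] [DecidableEq V] {G : SimpleGraph V} [DecidableRel G.Adj]

lemma key_induction (hΔ : 2 ≤ G.maxDegree) {x : ℝ}
    (hx : 1 + Real.sqrt ((G.maxDegree : ℝ) - 1) ≤ x)
    (S : Finset (V ⊕ G.edgeSet)) :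
    0 < mu (subdivision G) S x
    ∧ (∀ a : V, Sum.inl a ∈ S →
        (S.filter ((subdivision G).Adj (Sum.inl a))).card + 1 ≤ G.maxDegree →
        mu (subdivision G) (S.erase (Sum.inl a)) x < mu (subdivision G) S x)
    ∧ (∀ e : G.edgeSet, Sum.inr e ∈ S →
        (S.filter ((subdivision G).Adj (Sum.inr e))).card ≤ 1 →
        Real.sqrt ((G.maxDegree : ℝ) - 1) * mu (subdivision G) (S.erase (Sum.inr e)) x
          < mu (subdivision G) S x) := by
  set D := G.maxDegree with hD
  set sq := Real.sqrt ((D : ℝ) - 1) with hsq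
  have hD1 : (1 : ℝ) ≤ (D : ℝ) - 1 := by
    have : (2 : ℝ) ≤ (D : ℝ) := by exact_mod_cast hΔ
    linarith
  have hs2 : sq ^ 2 = (D : ℝ) - 1 := Real.sq_sqrt (by linarith)
  have hnn : 0 ≤ sq := hsq ▸ Real.sqrt_nonneg _
  have hs1 : 1 ≤ sq := by nlinarith
  have hs0 : 0 < sq := by linarith
  have hx2 : 2 ≤ x := by linarith
  induction S using Finset.strongInductionOn with
  | _ S IH =>
  rcases S.eq_empty_or_nonempty with rfl | hSne
  · refine ⟨by rw [mu_empty]; norm_num, ?_, ?_⟩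
    · intro a ha; simp at ha
    · intro e he; simp at he
  -- step lemma
  have step : ∀ u ∈ S, ∀ c β : ℝ, 0 < β → c < x →
      ((S.filter ((subdivision G).Adj u)).card : ℝ) ≤ (x - c) * β →
      (∀ v ∈ S.filter ((subdivision G).Adj u),
        β * mu (subdivision G) ((S.erase u).erase v) x < mu (subdivision G) (S.erase u) x) →
      0 < mu (subdivision G) (S.erase u) x →
      c * mu (subdivision G) (S.erase u) x < mu (subdivision G) S x := by
    intro u hu c β hβ hcx hcard hnb hS'
    rw [mu_rec hu x]
    set N := S.filter ((subdivision G).Adj u) with hN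
    rcases N.eq_empty_or_nonempty with hNe | hNe
    · rw [hNe]
      simp only [Finset.sum_empty, sub_zero]
      nlinarith
    · have h1 : β * ∑ v ∈ N, mu (subdivision G) ((S.erase u).erase v) x
          < (N.card : ℝ) * mu (subdivision G) (S.erase u) x := by
        rw [Finset.mul_sum]
        calc ∑ v ∈ N, β * mu (subdivision G) ((S.erase u).erase v) x
            < ∑ _v ∈ N, mu (subdivision G) (S.erase u) x :=
              Finset.sum_lt_sum_of_nonempty hNe hnb
          _ = (N.card : ℝ) * mu (subdivision G) (S.erase u) x := by
              rw [Finset.sum_const, nsmul_eq_mul]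
      have h2 : (N.card : ℝ) * mu (subdivision G) (S.erase u) x
          ≤ (x - c) * β * mu (subdivision G) (S.erase u) x :=
        mul_le_mul_of_nonneg_right hcard hS'.le
      nlinarith
  -- neighbour bounds when deleting an original vertex
  have nbA : ∀ a : V, Sum.inl a ∈ S →
      ∀ v ∈ S.filter ((subdivision G).Adj (Sum.inl a)),
      sq * mu (subdivision G) ((S.erase (Sum.inl a)).erase v) x
        < mu (subdivision G) (S.erase (Sum.inl a)) x := by
    intro a ha v hv
    rw [Finset.mem_filter] at hv
    obtain ⟨hvS, hadj⟩ := hv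
    match v, hvS, hadj with
    | Sum.inl b, hvS, hadj => exact absurd hadj not_subdivision_adj_inl_inl
    | Sum.inr e, hvS, hadj =>
      have hvS' : Sum.inr e ∈ S.erase (Sum.inl a) :=
        Finset.mem_erase.2 ⟨by simp, hvS⟩
      refine (IH (S.erase (Sum.inl a)) (Finset.erase_ssubset ha)).2.2 e hvS' ?_
      have h1 := filter_erase_adj (subdivision G) ha hadj.symm
      have h2 := degIn_inr_le S e
      omega
  -- neighbour bounds when deleting a subdivision vertex
  have nbB : ∀ e : G.edgeSet, Sum.inr e ∈ S →
      ∀ v ∈ S.filter ((subdivision G).Adj (Sum.inr e)),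
      (1 : ℝ) * mu (subdivision G) ((S.erase (Sum.inr e)).erase v) x
        < mu (subdivision G) (S.erase (Sum.inr e)) x := by
    intro e he v hv
    rw [Finset.mem_filter] at hv
    obtain ⟨hvS, hadj⟩ := hv
    match v, hvS, hadj with
    | Sum.inr f, hvS, hadj => exact absurd hadj not_subdivision_adj_inr_inr
    | Sum.inl b, hvS, hadj =>
      rw [one_mul]
      have hvS' : Sum.inl b ∈ S.erase (Sum.inr e) :=
        Finset.mem_erase.2 ⟨by simp, hvS⟩
      refine (IH (S.erase (Sum.inr e)) (Finset.erase_ssubset he)).2.1 b hvS' ?_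
      have h1 := filter_erase_adj (subdivision G) he hadj.symm
      have h2 := (degIn_inl_le S b).trans (G.degree_le_maxDegree b)
      omega
  have hdegD : ∀ a : V, ((S.filter ((subdivision G).Adj (Sum.inl a))).card : ℝ) ≤ (D : ℝ) := by
    intro a
    have := (degIn_inl_le S a).trans (G.degree_le_maxDegree a)
    exact_mod_cast this
  refine ⟨?_, ?_, ?_⟩
  · -- positivity
    obtain ⟨u, hu⟩ := hSne
    have hpos' : 0 < mu (subdivision G) (S.erase u) x :=
      (IH (S.erase u) (Finset.erase_ssubset hu)).1
    match u, hu with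
    | Sum.inl a, hu =>
      have h0 := step (Sum.inl a) hu 0 sq hs0 (by linarith)
        (by
          refine (hdegD a).trans ?_
          nlinarith) (nbA a hu) hpos'
      rw [zero_mul] at h0
      exact h0
    | Sum.inr e, hu =>
      have h0 := step (Sum.inr e) hu 0 1 one_pos (by linarith)
        (by
          have := degIn_inr_le S e
          have h2 : ((S.filter ((subdivision G).Adj (Sum.inr e))).card : ℝ) ≤ 2 := by
            exact_mod_cast this
          linarith) (nbB e hu) hpos'
      rw [zero_mul] at h0
      exact h0
  · -- inl ratio
    intro a ha hdeg
    have hpos' : 0 < mu (subdivision G) (S.erase (Sum.inl a)) x :=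
      (IH _ (Finset.erase_ssubset ha)).1
    have hcard : ((S.filter ((subdivision G).Adj (Sum.inl a))).card : ℝ) ≤ (x - 1) * sq := by
      have hn : ((S.filter ((subdivision G).Adj (Sum.inl a))).card : ℝ) ≤ (D : ℝ) - 1 := by
        have : (((S.filter ((subdivision G).Adj (Sum.inl a))).card : ℕ) : ℝ) + 1 ≤ (D : ℝ) := by
          exact_mod_cast hdeg
        linarith
      nlinarith
    have h1 := step (Sum.inl a) ha 1 sq hs0 (by linarith) hcard (nbA a ha) hpos'
    rw [one_mul] at h1
    exact h1
  · -- inr ratio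
    intro e he hdeg
    have hpos' : 0 < mu (subdivision G) (S.erase (Sum.inr e)) x :=
      (IH _ (Finset.erase_ssubset he)).1
    have hcard : ((S.filter ((subdivision G).Adj (Sum.inr e))).card : ℝ) ≤ (x - sq) * 1 := by
      have : ((S.filter ((subdivision G).Adj (Sum.inr e))).card : ℝ) ≤ 1 := by
        exact_mod_cast hdeg
      linarith
    exact step (Sum.inr e) he sq 1 one_pos (by linarith) hcard (nbB e he) hpos'

end Key

section Part1

variable [Fintype V] [DecidableEq V] {G : SimpleGraph V} [DecidableRel G.Adj]

lemma eval_matchPoly (Γ : SimpleGraph V) [DecidableRel Γ.Adj] (x : ℝ) :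
    (matchPoly Γ).eval x = mu Γ Finset.univ x := by
  have hmm : mm Γ (Finset.univ : Finset V) = matchings Γ := by
    ext M; simp [mem_mm]
  rw [matchPoly, mu, hmm, Polynomial.eval_finset_sum]
  refine Finset.sum_congr rfl (fun M hM => ?_)
  simp [Finset.card_univ]

lemma coeff_matchPoly_card (Γ : SimpleGraph V) [DecidableRel Γ.Adj] :
    (matchPoly Γ).coeff (Fintype.card V) = 1 := by
  rw [matchPoly, Polynomial.finset_sum_coeff]
  rw [Finset.sum_eq_single (∅ : Finset (Sym2 V))]
  · simp
  · intro M hM hMne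
    have hk : 1 ≤ M.card := Finset.card_pos.2 (Finset.nonempty_iff_ne_empty.2 hMne)
    have h2k : 2 * M.card ≤ Fintype.card V := by
      have := two_mul_card_le (mem_mm.2 ⟨hM, Finset.subset_univ _⟩)
      simpa [Finset.card_univ] using this
    have hm : Fintype.card V - 2 * M.card ≠ Fintype.card V := by omega
    have hC : ((-1 : Polynomial ℝ)) ^ M.card = Polynomial.C ((-1 : ℝ) ^ M.card) := by
      rw [map_pow, map_neg, map_one]
    rw [hC, Polynomial.coeff_C_mul, Polynomial.coeff_X_pow, if_neg (by omega), mul_zero]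
  · intro h
    exact absurd empty_mem_matchings h

lemma matchPoly_ne_zero (Γ : SimpleGraph V) [DecidableRel Γ.Adj] :
    matchPoly Γ ≠ 0 := by
  intro h
  have := coeff_matchPoly_card Γ
  rw [h] at this
  simp at this

lemma lroot_lt {p : Polynomial ℝ} {t : ℝ} (hp : p ≠ 0) (ht : 0 < t)
    (h : ∀ y : ℝ, p.IsRoot y → y < t) : lroot p < t := by
  rw [lroot]
  rcases Set.eq_empty_or_nonempty {x : ℝ | p.IsRoot x} with he | hne
  · rw [he, Real.sSup_empty]; exact ht
  · exact h _ (hne.csSup_mem (Polynomial.finite_setOf_isRoot hp))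

theorem part1 (hΔ : 2 ≤ G.maxDegree) :
    lroot (matchPoly (subdivision G)) < 1 + Real.sqrt ((G.maxDegree : ℝ) - 1) := by
  have hs0 : 0 ≤ Real.sqrt ((G.maxDegree : ℝ) - 1) := Real.sqrt_nonneg _
  refine lroot_lt (matchPoly_ne_zero _) (by linarith) ?_
  intro y hy
  by_contra hge
  push_neg at hge
  have hpos := (key_induction hΔ hge Finset.univ).1
  rw [← eval_matchPoly] at hpos
  rw [Polynomial.IsRoot] at hy
  linarith

end Part1

section CharMatch

variable [Fintype V] [DecidableEq V] {G : SimpleGraph V} [DecidableRel G.Adj]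

lemma edge_repr {e : Sym2 V} (hnd : ¬ e.IsDiag) : ∃ a b : V, a ≠ b ∧ e = s(a, b) := by
  revert hnd
  refine Sym2.ind (fun a b h => ?_) e
  exact ⟨a, b, by simpa [Sym2.isDiag_iff_proj_eq] using h, rfl⟩

lemma sym2_eq_of_two_mem {z : Sym2 V} {x y : V} (hxy : x ≠ y) (hx : x ∈ z) (hy : y ∈ z) :
    z = s(x, y) := by
  revert hx hy
  refine Sym2.ind (fun a b hx hy => ?_) z
  rw [Sym2.mem_iff] at hx hy
  rcases hx with rfl | rfl <;> rcases hy with rfl | rfl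
  · exact absurd rfl hxy
  · rfl
  · exact Sym2.eq_swap
  · exact absurd rfl hxy

/-- the involution attached to a finset of edges. -/
noncomputable def mFun (M : Finset (Sym2 V)) : V → V := fun v =>
  if h : ∃ e, e ∈ M ∧ v ∈ e then Sym2.Mem.other' h.choose_spec.2 else v

lemma mFun_not_covered {M : Finset (Sym2 V)} {v : V} (h : ¬ ∃ e, e ∈ M ∧ v ∈ e) :
    mFun M v = v := dif_neg h

lemma mFun_spec (hM : M ∈ matchings G) {v : V} {e : Sym2 V} (he : e ∈ M) (hv : v ∈ e) :
    s(v, mFun M v) = e := by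
  have h : ∃ e, e ∈ M ∧ v ∈ e := ⟨e, he, hv⟩
  rw [mFun, dif_pos h]
  have h1 : s(v, Sym2.Mem.other' h.choose_spec.2) = h.choose :=
    Sym2.other_spec' h.choose_spec.2
  rw [h1]
  exact unique_edge hM h.choose_spec.1 h.choose_spec.2 he hv

lemma mFun_mem (hM : M ∈ matchings G) {v : V} {e : Sym2 V} (he : e ∈ M) (hv : v ∈ e) :
    mFun M v ∈ e := by
  rw [← mFun_spec hM he hv]
  simp

lemma mFun_ne (hM : M ∈ matchings G) {v : V} {e : Sym2 V} (he : e ∈ M) (hv : v ∈ e) :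
    mFun M v ≠ v := by
  have hnd : ¬ e.IsDiag :=
    G.not_isDiag_of_mem_edgeSet (SimpleGraph.mem_edgeFinset.1 ((mem_matchings.1 hM).1 he))
  intro hcontra
  apply hnd
  rw [← mFun_spec hM he hv, hcontra]
  exact Sym2.isDiag_iff_proj_eq |>.2 rfl

lemma mFun_invol (hM : M ∈ matchings G) : Function.Involutive (mFun M) := by
  intro v
  by_cases hc : ∃ e, e ∈ M ∧ v ∈ e
  · obtain ⟨e, he, hv⟩ := hc
    have h1 : s(v, mFun M v) = e := mFun_spec hM he hv
    have hw : mFun M v ∈ e := mFun_mem hM he hv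
    have h2 : s(mFun M v, mFun M (mFun M v)) = e := mFun_spec hM he hw
    rw [← h1, Sym2.eq_iff] at h2
    rcases h2 with ⟨h3, h4⟩ | ⟨-, h4⟩
    · rw [h4, h3]
    · exact h4
  · rw [mFun_not_covered hc, mFun_not_covered hc]

/-- the permutation attached to a matching. -/
noncomputable def mPerm (M : Finset (Sym2 V)) (hM : M ∈ matchings G) : Equiv.Perm V :=
  Function.Involutive.toPerm _ (mFun_invol hM)

lemma mPerm_apply (hM : M ∈ matchings G) (v : V) : mPerm M hM v = mFun M v := rfl

lemma mPerm_eq_swap_mul {M : Finset (Sym2 V)} (hM : M ∈ matchings G) {a b : V}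
    (hab : a ≠ b) (he : s(a, b) ∈ M) :
    mPerm M hM = Equiv.swap a b * mPerm (M.erase s(a, b)) (matchings_subset hM (Finset.erase_subset _ _)) := by
  have hM' : M.erase s(a, b) ∈ matchings G := matchings_subset hM (Finset.erase_subset _ _)
  ext v
  rw [Equiv.Perm.mul_apply, mPerm_apply, mPerm_apply]
  by_cases hva : v = a
  · subst hva
    have h1 : s(v, mFun M v) = s(v, b) := mFun_spec hM he (by simp)
    have h2 : mFun M v = b := by
      rw [Sym2.eq_iff] at h1
      tauto
    have h3 : mFun (M.erase s(v, b)) v = v := by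
      refine mFun_not_covered ?_
      rintro ⟨f, hf, hvf⟩
      exact (Finset.ne_of_mem_erase hf)
        (unique_edge hM (Finset.mem_of_mem_erase hf) hvf he (by simp))
    rw [h2, h3, Equiv.swap_apply_left]
  · by_cases hvb : v = b
    · subst hvb
      have h1 : s(v, mFun M v) = s(a, v) := mFun_spec hM he (by simp)
      have h2 : mFun M v = a := by
        rw [Sym2.eq_iff] at h1
        rcases h1 with ⟨h3, -⟩ | ⟨-, h4⟩
        · exact absurd h3.symm hab
        · exact h4
      have h3 : mFun (M.erase s(a, v)) v = v := by
        refine mFun_not_covered ?_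
        rintro ⟨f, hf, hvf⟩
        exact (Finset.ne_of_mem_erase hf)
          (unique_edge hM (Finset.mem_of_mem_erase hf) hvf he (by simp))
      rw [h2, h3, Equiv.swap_apply_right]
    · by_cases hc : ∃ f, f ∈ M ∧ v ∈ f
      · obtain ⟨f, hf, hvf⟩ := hc
        have hfne : f ≠ s(a, b) := by
          rintro rfl
          rw [Sym2.mem_iff] at hvf
          tauto
        have hf' : f ∈ M.erase s(a, b) := Finset.mem_erase.2 ⟨hfne, hf⟩
        have h1 : s(v, mFun M v) = f := mFun_spec hM hf hvf
        have h2 : s(v, mFun (M.erase s(a, b)) v) = f := mFun_spec hM' hf' hvf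
        have h3 : mFun (M.erase s(a, b)) v = mFun M v := by
          rw [← h1, Sym2.eq_iff] at h2
          rcases h2 with ⟨-, h4⟩ | ⟨h4, h5⟩
          · exact h4
          · rw [h5, ← h4]
        have hwa : mFun M v ≠ a := by
          intro hcontra
          have : a ∈ f := hcontra ▸ mFun_mem hM hf hvf
          exact hfne (unique_edge hM hf this he (by simp))
        have hwb : mFun M v ≠ b := by
          intro hcontra
          have : b ∈ f := hcontra ▸ mFun_mem hM hf hvf
          exact hfne (unique_edge hM hf this he (by simp))
        rw [h3, Equiv.swap_apply_of_ne_of_ne hwa hwb]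
      · have hc' : ¬ ∃ f, f ∈ M.erase s(a, b) ∧ v ∈ f := by
          rintro ⟨f, hf, hvf⟩
          exact hc ⟨f, Finset.mem_of_mem_erase hf, hvf⟩
        rw [mFun_not_covered hc, mFun_not_covered hc',
          Equiv.swap_apply_of_ne_of_ne hva hvb]

lemma sign_mPerm : ∀ (n : ℕ) (M : Finset (Sym2 V)) (hM : M ∈ matchings G), M.card = n →
    Equiv.Perm.sign (mPerm M hM) = (-1) ^ n := by
  intro n
  induction n with
  | zero =>
    intro M hM hcard
    rw [Finset.card_eq_zero] at hcard
    subst hcard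
    have h1 : mPerm (∅ : Finset (Sym2 V)) hM = 1 := by
      ext v
      rw [mPerm_apply, mFun_not_covered (by simp)]
      rfl
    rw [h1]
    simp
  | succ n IHn =>
    intro M hM hcard
    have hne : M.Nonempty := Finset.card_pos.1 (by omega)
    obtain ⟨e, he⟩ := hne
    have hnd : ¬ e.IsDiag :=
      G.not_isDiag_of_mem_edgeSet (SimpleGraph.mem_edgeFinset.1 ((mem_matchings.1 hM).1 he))
    obtain ⟨a, b, hab, rfl⟩ := edge_repr hnd
    rw [mPerm_eq_swap_mul hM hab he, map_mul, Equiv.Perm.sign_swap hab,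
      IHn _ _ (by rw [Finset.card_erase_of_mem he]; omega), pow_succ]
    rw [mul_comm]

end CharMatch

section CharMatch2

variable [Fintype V] [DecidableEq V] {G : SimpleGraph V} [DecidableRel G.Adj]

/-- the set of non-fixed points of a permutation. -/
def moved (σ : Equiv.Perm V) : Finset V := Finset.univ.filter (fun i => σ i ≠ i)

/-- the matching attached to an adjacency-respecting involution. -/
def Mof (σ : Equiv.Perm V) : Finset (Sym2 V) := (moved σ).image (fun i => s(i, σ i))

variable {σ : Equiv.Perm V}

lemma mem_Mof {e : Sym2 V} : e ∈ Mof σ ↔ ∃ i, σ i ≠ i ∧ s(i, σ i) = e := by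
  simp [Mof, moved]

lemma Mof_mem_matchings (hadj : ∀ i, σ i ≠ i → G.Adj (σ i) i)
    (hinv : ∀ i, σ (σ i) = i) : Mof σ ∈ matchings G := by
  rw [mem_matchings]
  constructor
  · intro e he
    obtain ⟨i, hi, rfl⟩ := mem_Mof.1 he
    rw [SimpleGraph.mem_edgeFinset, SimpleGraph.mem_edgeSet]
    exact (hadj i hi).symm
  · intro e he f hf hef w hwe hwf
    obtain ⟨i, hi, rfl⟩ := mem_Mof.1 he
    obtain ⟨j, hj, rfl⟩ := mem_Mof.1 hf
    rw [Sym2.mem_iff] at hwe hwf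
    rcases hwe with rfl | rfl <;> rcases hwf with h | h
    · exact hef (by rw [h])
    · apply hef
      subst h
      rw [hinv j]
      exact Sym2.eq_swap
    · apply hef
      rw [← h, hinv i]
      exact Sym2.eq_swap
    · exact hef (by rw [σ.injective h])
  
lemma covered_Mof (hinv : ∀ i, σ (σ i) = i) : covered (Mof σ) = moved σ := by
  ext v
  rw [mem_covered, moved, Finset.mem_filter]
  constructor
  · rintro ⟨e, he, hv⟩
    obtain ⟨i, hi, rfl⟩ := mem_Mof.1 he
    refine ⟨Finset.mem_univ v, ?_⟩
    rw [Sym2.mem_iff] at hv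
    rcases hv with rfl | rfl
    · exact hi
    · rw [hinv i]
      exact fun h => hi h.symm
  · rintro ⟨-, hv⟩
    exact ⟨s(v, σ v), mem_Mof.2 ⟨v, hv, rfl⟩, by simp⟩

lemma mPerm_Mof (hadj : ∀ i, σ i ≠ i → G.Adj (σ i) i) (hinv : ∀ i, σ (σ i) = i)
    (h : Mof σ ∈ matchings G) : mPerm (Mof σ) h = σ := by
  ext v
  rw [mPerm_apply]
  by_cases hv : σ v = v
  · rw [mFun_not_covered, hv]
    rintro ⟨e, he, hve⟩
    have : v ∈ covered (Mof σ) := mem_covered.2 ⟨e, he, hve⟩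
    rw [covered_Mof hinv, moved, Finset.mem_filter] at this
    exact this.2 hv
  · have he : s(v, σ v) ∈ Mof σ := mem_Mof.2 ⟨v, hv, rfl⟩
    have := mFun_spec (G := G) h he (Sym2.mem_iff.2 (Or.inl rfl))
    rwa [Sym2.congr_right] at this

theorem charpoly_eq_matchPoly
    (hinvol : ∀ σ : Equiv.Perm V, (∀ i, σ i ≠ i → G.Adj (σ i) i) → ∀ i, σ (σ i) = i) :
    (G.adjMatrix ℝ).charpoly = matchPoly G := by
  classical
  rw [Matrix.charpoly, Matrix.det_apply, matchPoly]
  set K := Finset.univ.filter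
    (fun σ : Equiv.Perm V => ∀ i, σ i ≠ i → G.Adj (σ i) i) with hK
  have hvanish : ∀ σ ∈ (Finset.univ : Finset (Equiv.Perm V)), σ ∉ K →
      Equiv.Perm.sign σ • ∏ i, (G.adjMatrix ℝ).charmatrix (σ i) i = 0 := by
    intro σ _ hσ
    rw [hK, Finset.mem_filter] at hσ
    push_neg at hσ
    obtain ⟨i, hi, hnadj⟩ := hσ (Finset.mem_univ σ)
    have hzero : (G.adjMatrix ℝ).charmatrix (σ i) i = 0 := by
      rw [Matrix.charmatrix_apply_ne _ _ _ hi, SimpleGraph.adjMatrix_apply, if_neg hnadj]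
      simp
    have hp0 : ∏ i : V, (G.adjMatrix ℝ).charmatrix (σ i) i = 0 :=
      Finset.prod_eq_zero (Finset.mem_univ i) hzero
    rw [hp0, smul_zero]
  rw [← Finset.sum_subset (Finset.subset_univ K) hvanish]
  refine Finset.sum_nbij' (i := fun σ => Mof σ)
    (j := fun M => if h : M ∈ matchings G then mPerm M h else 1) ?_ ?_ ?_ ?_ ?_
  · intro σ hσ
    rw [hK, Finset.mem_filter] at hσ
    exact Mof_mem_matchings hσ.2 (hinvol σ hσ.2)
  · intro M hM
    rw [dif_pos hM, hK, Finset.mem_filter]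
    refine ⟨Finset.mem_univ _, fun v hv => ?_⟩
    rw [mPerm_apply] at hv ⊢
    have hc : ∃ e, e ∈ M ∧ v ∈ e := by
      by_contra hc
      exact hv (mFun_not_covered hc)
    obtain ⟨e, he, hve⟩ := hc
    have hspec := mFun_spec (G := G) hM he hve
    have : s(v, mFun M v) ∈ G.edgeSet := by
      rw [hspec]
      exact SimpleGraph.mem_edgeFinset.1 ((mem_matchings.1 hM).1 he)
    exact (SimpleGraph.mem_edgeSet G).1 this |>.symm
  · intro σ hσ
    rw [hK, Finset.mem_filter] at hσ
    have hM := Mof_mem_matchings hσ.2 (hinvol σ hσ.2)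
    rw [dif_pos hM]
    exact mPerm_Mof hσ.2 (hinvol σ hσ.2) hM
  · intro M hM
    rw [dif_pos hM]
    ext e
    rw [mem_Mof]
    constructor
    · rintro ⟨i, hi, rfl⟩
      rw [mPerm_apply] at hi ⊢
      have hc : ∃ e, e ∈ M ∧ i ∈ e := by
        by_contra hc
        exact hi (mFun_not_covered hc)
      obtain ⟨f, hf, hif⟩ := hc
      rw [mFun_spec (G := G) hM hf hif]
      exact hf
    · intro he
      have hnd : ¬ e.IsDiag :=
        G.not_isDiag_of_mem_edgeSet (SimpleGraph.mem_edgeFinset.1 ((mem_matchings.1 hM).1 he))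
      obtain ⟨a, b, hab, rfl⟩ := edge_repr hnd
      refine ⟨a, ?_, ?_⟩
      · rw [mPerm_apply]
        exact mFun_ne hM he (by simp)
      · rw [mPerm_apply, mFun_spec (G := G) hM he (by simp)]
  · intro σ hσ
    rw [hK, Finset.mem_filter] at hσ
    have hinv := hinvol σ hσ.2
    have hM := Mof_mem_matchings hσ.2 hinv
    have hsign : Equiv.Perm.sign σ = (-1) ^ (Mof σ).card := by
      conv_lhs => rw [← mPerm_Mof hσ.2 hinv hM]
      exact sign_mPerm (Mof σ).card (Mof σ) hM rfl
    have hmcard : (moved σ).card = 2 * (Mof σ).card := by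
      rw [← covered_Mof hinv]
      exact card_covered hM
    have hprod : ∏ i, (G.adjMatrix ℝ).charmatrix (σ i) i
        = (-1 : Polynomial ℝ) ^ (moved σ).card
          * Polynomial.X ^ (Fintype.card V - (moved σ).card) := by
      rw [← Finset.prod_filter_mul_prod_filter_not Finset.univ (fun i => σ i ≠ i)]
      have h1 : ∏ i ∈ Finset.univ.filter (fun i => σ i ≠ i),
          (G.adjMatrix ℝ).charmatrix (σ i) i = (-1 : Polynomial ℝ) ^ (moved σ).card := by
        rw [moved, Finset.prod_congr rfl (fun i hi => ?_), Finset.prod_const]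
        rw [Finset.mem_filter] at hi
        rw [Matrix.charmatrix_apply_ne _ _ _ hi.2, SimpleGraph.adjMatrix_apply,
          if_pos (hσ.2 i hi.2)]
        simp
      have h2 : ∏ i ∈ Finset.univ.filter (fun i => ¬ σ i ≠ i),
          (G.adjMatrix ℝ).charmatrix (σ i) i
          = Polynomial.X ^ (Fintype.card V - (moved σ).card) := by
        have hcc := Finset.card_filter_add_card_filter_not
          (s := (Finset.univ : Finset V)) (fun i => σ i ≠ i)
        rw [Finset.prod_congr rfl (fun i hi => ?_), Finset.prod_const]
        · congr 1
          rw [Finset.card_univ] at hcc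
          rw [moved]
          omega
        rw [Finset.mem_filter] at hi
        have hii : σ i = i := not_not.1 hi.2
        rw [hii, Matrix.charmatrix_apply_eq, SimpleGraph.adjMatrix_apply,
          if_neg (G.irrefl)]
        simp
      rw [h1, h2]
    rw [hprod, hsign, hmcard]
    have heven : (-1 : Polynomial ℝ) ^ (2 * (Mof σ).card) = 1 := by
      rw [pow_mul]
      norm_num
    rw [heven, one_mul]
    simp [Units.smul_def, zsmul_eq_mul]

end CharMatch2

section Acyclic

variable [Fintype V] [DecidableEq V] {G : SimpleGraph V} [DecidableRel G.Adj]

lemma subdivision_adj_isLeft {x y : V ⊕ G.edgeSet} (h : (subdivision G).Adj x y) :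
    x.isLeft = !y.isLeft := by
  match x, y with
  | Sum.inl a, Sum.inl b => exact absurd h not_subdivision_adj_inl_inl
  | Sum.inr e, Sum.inr f => exact absurd h not_subdivision_adj_inr_inr
  | Sum.inl a, Sum.inr e => simp
  | Sum.inr e, Sum.inl a => simp

lemma subdivision_invol_aux (hG : G.IsAcyclic) (σ : Equiv.Perm (V ⊕ G.edgeSet))
    (hσ : ∀ i, σ i ≠ i → (subdivision G).Adj (σ i) i) (a : V)
    (hi : σ (Sum.inl a) ≠ Sum.inl a) (h2 : σ (σ (Sum.inl a)) ≠ Sum.inl a) : False := by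
  set i : V ⊕ G.edgeSet := Sum.inl a with hidef
  have hmoved : ∀ n, σ ((σ ^ n) i) ≠ (σ ^ n) i := by
    intro n h
    have h1 : σ ((σ ^ n) i) = (σ ^ n) (σ i) := by
      rw [← Equiv.Perm.mul_apply, ← Equiv.Perm.mul_apply, ← pow_succ, ← pow_succ']
    rw [h1] at h
    exact hi ((σ ^ n).injective h)
  have hadjn : ∀ n, (subdivision G).Adj ((σ ^ (n+1)) i) ((σ ^ n) i) := by
    intro n
    have hp : (σ ^ (n+1)) i = σ ((σ ^ n) i) := by rw [pow_succ']; rfl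
    rw [hp]
    exact hσ _ (hmoved n)
  have hside : ∀ n, ((σ ^ (2*n)) i).isLeft = true ∧ ((σ ^ (2*n+1)) i).isLeft = false := by
    intro n
    induction n with
    | zero =>
      have h0 : ((σ ^ 0) i).isLeft = true := by simp [hidef]
      refine ⟨by simpa using h0, ?_⟩
      have hthis := subdivision_adj_isLeft (hadjn 0)
      rw [h0] at hthis
      simpa using hthis
    | succ n IHn =>
      have h1 : ((σ ^ (2*n+1+1)) i).isLeft = true := by
        have hthis := subdivision_adj_isLeft (hadjn (2*n+1))
        rw [IHn.2] at hthis
        simpa using hthis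
      have h2' : ((σ ^ (2*n+1+1+1)) i).isLeft = false := by
        have hthis := subdivision_adj_isLeft (hadjn (2*n+1+1))
        rw [h1] at hthis
        simpa using hthis
      constructor
      · rw [show 2*(n+1) = 2*n+1+1 by ring]
        exact h1
      · rw [show 2*(n+1)+1 = 2*n+1+1+1 by ring]
        exact h2'
  have hex : ∃ n, 0 < n ∧ (σ ^ n) i = i :=
    ⟨orderOf σ, orderOf_pos σ, by rw [pow_orderOf_eq_one]; rfl⟩
  set m := Nat.find hex with hmdef
  obtain ⟨hm0, hmfix⟩ : 0 < m ∧ (σ ^ m) i = i := Nat.find_spec hex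
  have hmin : ∀ j, j < m → ¬(0 < j ∧ (σ ^ j) i = i) := fun j hj => Nat.find_min hex hj
  have hm1 : m ≠ 1 := by
    intro h
    rw [h, pow_one] at hmfix
    exact hi hmfix
  have hm2 : m ≠ 2 := by
    intro h
    rw [h] at hmfix
    have hsq : (σ ^ 2) i = σ (σ i) := by rw [pow_succ', pow_one]; rfl
    rw [hsq] at hmfix
    exact h2 hmfix
  have hmeven : ∃ k, m = 2 * k := by
    rcases Nat.even_or_odd m with he | ho
    · obtain ⟨r, hr⟩ := he
      exact ⟨r, by omega⟩
    · obtain ⟨q, hq⟩ := ho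
      exfalso
      have hthis := (hside q).2
      rw [← hq, hmfix] at hthis
      simp [hidef] at hthis
  obtain ⟨k, hk⟩ := hmeven
  have hk2 : 2 ≤ k := by omega
  have hsub : ∀ p q, p < q → q < m → (σ ^ p) i ≠ (σ ^ q) i := by
    intro p q hpq hq h
    have e1 : (σ ^ (q - p)) ((σ ^ p) i) = (σ ^ p) i := by
      rw [← Equiv.Perm.mul_apply, ← pow_add, Nat.sub_add_cancel hpq.le]
      exact h.symm
    have e2 : (σ ^ (m - p)) ((σ ^ p) i) = i := by
      rw [← Equiv.Perm.mul_apply, ← pow_add, Nat.sub_add_cancel (by omega : p ≤ m)]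
      exact hmfix
    have e3 : (σ ^ (q - p)) i = i := by
      calc (σ ^ (q-p)) i = (σ ^ (q-p)) ((σ ^ (m-p)) ((σ ^ p) i)) := by rw [e2]
        _ = (σ ^ (m-p)) ((σ ^ (q-p)) ((σ ^ p) i)) := by
            have hcomm : (σ ^ (q-p)) * ((σ ^ (m-p)) * (σ ^ p))
                = (σ ^ (m-p)) * ((σ ^ (q-p)) * (σ ^ p)) := by
              rw [← pow_add, ← pow_add, ← pow_add, ← pow_add]
              congr 1
              omega
            calc (σ ^ (q-p)) ((σ ^ (m-p)) ((σ ^ p) i))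
                = ((σ ^ (q-p)) * ((σ ^ (m-p)) * (σ ^ p))) i := rfl
              _ = ((σ ^ (m-p)) * ((σ ^ (q-p)) * (σ ^ p))) i := by rw [hcomm]
              _ = (σ ^ (m-p)) ((σ ^ (q-p)) ((σ ^ p) i)) := rfl
        _ = (σ ^ (m-p)) ((σ ^ p) i) := by rw [e1]
        _ = i := e2
    exact hmin (q - p) (by omega) ⟨by omega, e3⟩
  have hinj : ∀ p, p < m → ∀ q, q < m → (σ ^ p) i = (σ ^ q) i → p = q := by
    intro p hp q hq h
    rcases lt_trichotomy p q with hlt | heq | hgt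
    · exact absurd h (hsub p q hlt hq)
    · exact heq
    · exact absurd h.symm (hsub q p hgt hp)
  have hAex : ∀ n, ∃ b : V, (σ ^ (2*n)) i = Sum.inl b := by
    intro n
    rcases hh : (σ ^ (2*n)) i with b | f
    · exact ⟨b, rfl⟩
    · have hthis := (hside n).1
      rw [hh] at hthis
      simp at hthis
  choose A hA using hAex
  have hEex : ∀ n, ∃ f : G.edgeSet, (σ ^ (2*n+1)) i = Sum.inr f := by
    intro n
    rcases hh : (σ ^ (2*n+1)) i with b | f
    · have hthis := (hside n).2
      rw [hh] at hthis
      simp at hthis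
    · exact ⟨f, rfl⟩
  choose E hE using hEex
  have hAk : A k = A 0 := by
    have h1 : (σ ^ (2*k)) i = (σ ^ (2*0)) i := by
      rw [← hk, hmfix]
      simp
    have hthis := (hA k).symm.trans (h1.trans (hA 0))
    exact Sum.inl.inj hthis
  have hAdist : ∀ p, p < k → ∀ q, q < k → A p = A q → p = q := by
    intro p hp q hq h
    have hthis := hinj (2*p) (by omega) (2*q) (by omega) (by rw [hA p, hA q, h])
    omega
  have hmemE : ∀ n, A n ∈ (E n : Sym2 V) ∧ A (n+1) ∈ (E n : Sym2 V) := by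
    intro n
    constructor
    · have hthis := hadjn (2*n)
      rw [hE n, hA n] at hthis
      exact subdivision_adj_inr_inl.1 hthis
    · have hthis := hadjn (2*n+1)
      rw [show 2*n+1+1 = 2*(n+1) by ring] at hthis
      rw [hE n, hA (n+1)] at hthis
      exact subdivision_adj_inl_inr.1 hthis
  have hAne : ∀ n, n < k → A n ≠ A (n+1) := by
    intro n hn heq
    by_cases h : n + 1 < k
    · have hthis := hAdist n hn (n+1) h heq
      omega
    · have hnk : n + 1 = k := by omega
      rw [hnk, hAk] at heq
      have hthis := hAdist n hn 0 (by omega) heq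
      omega
  have hadjA : ∀ n, n < k → G.Adj (A n) (A (n+1)) := by
    intro n hn
    have heq : (E n : Sym2 V) = s(A n, A (n+1)) :=
      sym2_eq_of_two_mem (hAne n hn) (hmemE n).1 (hmemE n).2
    have hes : (E n : Sym2 V) ∈ G.edgeSet := (E n).2
    rw [heq, SimpleGraph.mem_edgeSet] at hes
    exact hes
  have hk3 : 3 ≤ k := by
    by_contra hlt
    have hk2' : k = 2 := by omega
    have hne01 : A 0 ≠ A 1 := hAne 0 (by omega)
    have hne12 : A 1 ≠ A 2 := hAne 1 (by omega)
    have hE0 : (E 0 : Sym2 V) = s(A 0, A 1) :=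
      sym2_eq_of_two_mem hne01 (hmemE 0).1 (hmemE 0).2
    have hE1 : (E 1 : Sym2 V) = s(A 1, A 2) :=
      sym2_eq_of_two_mem hne12 (hmemE 1).1 (hmemE 1).2
    have hA2 : A 2 = A 0 := hk2' ▸ hAk
    have hEeq : E 0 = E 1 := by
      apply Subtype.ext
      rw [hE0, hE1, hA2, Sym2.eq_swap]
    have hthis := hinj 1 (by omega) 3 (by omega)
      (by
        rw [show (1:ℕ) = 2*0+1 by ring, show (3:ℕ) = 2*1+1 by ring, hE 0, hE 1, hEeq])
    omega
  have wex : ∀ n, n ≤ k → ∃ w : G.Walk (A 0) (A n),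
      w.support = (List.range (n+1)).map A ∧
      w.edges = (List.range n).map (fun t => s(A t, A (t+1))) := by
    intro n
    induction n with
    | zero =>
      intro _
      exact ⟨SimpleGraph.Walk.nil, by rw [List.range_succ]; simp, by simp⟩
    | succ n IHn =>
      intro h
      obtain ⟨w, hws, hwe⟩ := IHn (by omega)
      have hlm : ∀ {α : Type u_1} (f : ℕ → α) (n' : ℕ),
          (List.map f (List.range n')).concat (f n') = List.map f (List.range (n'+1)) := by
        intro α f n'
        rw [List.range_succ, List.map_append, List.concat_eq_append]
        simp
      refine ⟨w.concat (hadjA n (by omega)), ?_, ?_⟩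
      · rw [SimpleGraph.Walk.support_concat, hws, ← List.concat_eq_append, hlm A (n+1)]
      · rw [SimpleGraph.Walk.edges_concat, hwe, hlm (fun t => s(A t, A (t+1))) n]
  obtain ⟨w, hws, hwe⟩ := wex k le_rfl
  set c : G.Walk (A 0) (A 0) := w.copy rfl hAk with hcdef
  have hcs : c.support = (List.range (k+1)).map A := by
    rw [hcdef, SimpleGraph.Walk.support_copy, hws]
  have hce : c.edges = (List.range k).map (fun t => s(A t, A (t+1))) := by
    rw [hcdef, SimpleGraph.Walk.edges_copy, hwe]
  refine hG c ?_
  rw [SimpleGraph.Walk.isCycle_def]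
  refine ⟨?_, ?_, ?_⟩
  · rw [SimpleGraph.Walk.isTrail_def, hce]
    refine List.Nodup.map_on ?_ (List.nodup_range (n := k))
    intro p hp q hq heq
    rw [List.mem_range] at hp hq
    rw [Sym2.eq_iff] at heq
    rcases heq with ⟨h1, -⟩ | ⟨h1, h2'⟩
    · exact hAdist p hp q hq h1
    · by_cases hq1 : q + 1 < k
      · have hpq1 : p = q + 1 := hAdist p hp (q+1) hq1 h1
        by_cases hp1 : p + 1 < k
        · have hthis : p + 1 = q := hAdist (p+1) hp1 q hq h2'
          omega
        · have hp1k : p + 1 = k := by omega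
          have hA0q : A 0 = A q := by rw [← hAk, ← hp1k, h2']
          have hthis : 0 = q := hAdist 0 (by omega) q hq hA0q
          omega
      · have hq1k : q + 1 = k := by omega
        have hA0p : A p = A 0 := by rw [h1, hq1k, hAk]
        have hp0 : p = 0 := hAdist p hp 0 (by omega) hA0p
        have hthis : p + 1 = q := by
          have hp1 : p + 1 < k := by omega
          exact hAdist (p+1) hp1 q hq h2'
        omega
  · intro hnil
    have hthis := congrArg List.length hcs
    rw [hnil] at hthis
    simp at hthis
    omega
  · rw [hcs, List.range_succ_eq_map, List.map_cons, List.map_map]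
    simp only [List.tail_cons]
    refine List.Nodup.map_on ?_ (List.nodup_range (n := k))
    intro p hp q hq heq
    rw [List.mem_range] at hp hq
    simp only [Function.comp, Nat.succ_eq_add_one] at heq
    by_cases hp1 : p + 1 < k
    · by_cases hq1 : q + 1 < k
      · have hthis := hAdist (p+1) hp1 (q+1) hq1 heq
        omega
      · have hq1k : q + 1 = k := by omega
        rw [hq1k, hAk] at heq
        have hthis := hAdist (p+1) hp1 0 (by omega) heq
        omega
    · have hp1k : p + 1 = k := by omega
      by_cases hq1 : q + 1 < k
      · rw [hp1k, hAk] at heq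
        have hthis := hAdist 0 (by omega) (q+1) hq1 heq
        omega
      · omega

lemma subdivision_invol (hG : G.IsAcyclic) (σ : Equiv.Perm (V ⊕ G.edgeSet))
    (hσ : ∀ i, σ i ≠ i → (subdivision G).Adj (σ i) i) :
    ∀ i, σ (σ i) = i := by
  intro i
  by_contra h2
  have hi : σ i ≠ i := by
    intro h
    exact h2 (by rw [h, h])
  rcases i with a | e
  · exact subdivision_invol_aux hG σ hσ a hi h2
  · have hi' : σ (σ (Sum.inr e)) ≠ σ (Sum.inr e) := fun h => hi (σ.injective h)
    have h2' : σ (σ (σ (Sum.inr e))) ≠ σ (Sum.inr e) := fun h => h2 (σ.injective h)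
    have hadj := hσ _ hi
    cases hσi : σ (Sum.inr e) with
    | inl b =>
      rw [hσi] at hi' h2'
      exact subdivision_invol_aux hG σ hσ b hi' h2'
    | inr f =>
      rw [hσi] at hadj
      exact not_subdivision_adj_inr_inr hadj

end Acyclic

/-- For a finite graph `G` with `Δ(G) ≥ 2`, the largest root of the
matching polynomial of the subdivision `S(G)` satisfies
`λ(𝓜(S(G), x)) < 1 + √(Δ(G) − 1)`; in particular, if `G` is a forest, then the largest
eigenvalue (largest root of the characteristic polynomial) of the adjacency matrix of
`S(G)` satisfies the same strict inequality. -/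
theorem lroot_matchPoly_subdivision_lt [Fintype V] [DecidableEq V] (G : SimpleGraph V)
    [DecidableRel G.Adj] (hΔ : 2 ≤ G.maxDegree) :
    lroot (matchPoly (subdivision G)) < 1 + Real.sqrt ((G.maxDegree : ℝ) - 1)
    ∧ (G.IsAcyclic →
        lroot (((subdivision G).adjMatrix ℝ).charpoly) <
          1 + Real.sqrt ((G.maxDegree : ℝ) - 1)) := by
  constructor
  · exact part1 hΔ
  · intro hac
    rw [charpoly_eq_matchPoly (subdivision_invol hac)]
    exact part1 hΔ

end LM
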